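/- For h > 0 with h ≠ 1 and fixed p ≠ 0, the limit as r → 0 of K(h^r, p/r) equals the Specht ratio S(h^p), where S(h) = (h-1) * h^(1/(h-1)) / (e * log h). -/

import Mathlib

open scoped ComplexOrder Kronecker

/-- Matrix power via the continuous functional calculus. -/
noncomputable def mpow {n : Type*} [Fintype n] [DecidableEq n]
    (A : Matrix n n ℂ) (p : ℝ) : Matrix n n ℂ :=
  cfc (fun x : ℝ => x ^ p) A

/-- The Loewner order on matrices. -/
def LoewnerLE {n : Type*} [Fintype n] (A B : Matrix n n ℂ) : Prop :=
  (B - A).PosSemidef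

/-- The matrix geometric mean `A # B = A^{1/2}(A^{-1/2} B A^{-1/2})^{1/2} A^{1/2}`. -/
noncomputable def geo {n : Type*} [Fintype n] [DecidableEq n]
    (A B : Matrix n n ℂ) : Matrix n n ℂ :=
  mpow A (1/2) * mpow (mpow A (-(1/2)) * B * mpow A (-(1/2))) (1/2) * mpow A (1/2)

/-- The generalized Kantorovich constant. -/
noncomputable def Kconst (h p : ℝ) : ℝ :=
  ((h ^ p - h) / ((p - 1) * (h - 1))) *
    (((p - 1) / p) * ((h ^ p - 1) / (h ^ p - h))) ^ p

/-- The Specht ratio. -/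
noncomputable def Specht (h : ℝ) : ℝ :=
  if h = 1 then 1 else (h - 1) * h ^ (1 / (h - 1)) / (Real.exp 1 * Real.log h)

theorem kantorovich_tendsto_specht (h p : ℝ) (hh : 0 < h) (hh1 : h ≠ 1)
    (hp0 : p ≠ 0) :
    Filter.Tendsto (fun r : ℝ => Kconst (h ^ r) (p / r))
      (nhdsWithin 0 {(0 : ℝ)}ᶜ) (nhds (Specht (h ^ p))) := by
  have hL : Real.log h ≠ 0 := Real.log_ne_zero_of_pos_of_ne_one hh hh1
  set L := Real.log h with hLdef
  set t := h ^ p with htdef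
  have ht0 : 0 < t := Real.rpow_pos_of_pos hh p
  have hlogt : Real.log t = p * L := Real.log_rpow hh p
  have ht1 : t ≠ 1 := by
    intro H
    rw [H, Real.log_one] at hlogt
    exact hp0 (by rcases mul_eq_zero.mp hlogt.symm with h'|h' <;> [exact h'; exact absurd h' hL])
  have ht1' : t - 1 ≠ 0 := sub_ne_zero.mpr ht1
  -- rewrite h ^ r as exp (L * r)
  have hrw : (fun r : ℝ => h ^ r) = fun r => Real.exp (L * r) :=
    funext fun r => Real.rpow_def_of_pos hh r
  -- derivative 1 : r ↦ h ^ r at 0 has derivative L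
  have hd1 : HasDerivAt (fun r : ℝ => h ^ r) L 0 := by
    rw [hrw]
    simpa using (((hasDerivAt_id (0:ℝ)).const_mul L).exp)
  have hcont : Filter.Tendsto (fun r : ℝ => h ^ r) (nhdsWithin 0 {(0:ℝ)}ᶜ) (nhds 1) := by
    have := hd1.continuousAt.continuousWithinAt (s := {(0:ℝ)}ᶜ)
    simpa [ContinuousWithinAt, Real.rpow_zero] using this
  -- slope 1
  have s1 : Filter.Tendsto (fun r : ℝ => (h ^ r - 1) / r) (nhdsWithin 0 {(0:ℝ)}ᶜ) (nhds L) := by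
    have := hasDerivAt_iff_tendsto_slope.mp hd1
    apply this.congr
    intro r
    simp [slope_def_field, Real.rpow_zero]
  -- derivative 2 : r ↦ log (1 - r/p) at 0
  have s2 : Filter.Tendsto (fun r : ℝ => Real.log (1 - r / p) / r) (nhdsWithin 0 {(0:ℝ)}ᶜ)
      (nhds (-p⁻¹)) := by
    have hinner : HasDerivAt (fun r : ℝ => 1 - r / p) (-p⁻¹) 0 := by
      simpa [div_eq_mul_inv, Pi.sub_def] using ((hasDerivAt_const (0:ℝ) (1:ℝ)).sub ((hasDerivAt_id (0:ℝ)).div_const p))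
    have hd2 : HasDerivAt (fun r : ℝ => Real.log (1 - r / p)) (-p⁻¹) 0 := by
      have := hinner.log (by norm_num)
      simpa using this
    have := hasDerivAt_iff_tendsto_slope.mp hd2
    apply this.congr
    intro r
    simp [slope_def_field]
  -- derivative 3 : ψ r = log ((t - h^r)/(t-1)) at 0
  have s3 : Filter.Tendsto (fun r : ℝ => Real.log ((t - h ^ r) / (t - 1)) / r)
      (nhdsWithin 0 {(0:ℝ)}ᶜ) (nhds (-(L / (t - 1)))) := by
    have hinner : HasDerivAt (fun r : ℝ => (t - h ^ r) / (t - 1)) (-L / (t - 1)) 0 := by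
      simpa using (((hasDerivAt_const (0:ℝ) t).sub hd1).div_const (t - 1))
    have hval : (t - h ^ (0:ℝ)) / (t - 1) = 1 := by
      rw [Real.rpow_zero]; field_simp
    have hd3 : HasDerivAt (fun r : ℝ => Real.log ((t - h ^ r) / (t - 1))) (-(L / (t - 1))) 0 := by
      have := hinner.log (by rw [hval]; norm_num)
      simpa [Real.rpow_zero, div_self ht1', neg_div] using this
    have := hasDerivAt_iff_tendsto_slope.mp hd3
    apply this.congr
    intro r
    simp [slope_def_field, div_self ht1']
  -- the model functions
  set A : ℝ → ℝ := fun r => (t - h ^ r) * ((p - r)⁻¹ * ((h ^ r - 1) / r)⁻¹) with hA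
  set B : ℝ → ℝ := fun r =>
    p * (Real.log (1 - r / p) / r - Real.log ((t - h ^ r) / (t - 1)) / r) with hB
  have hAlim : Filter.Tendsto A (nhdsWithin 0 {(0:ℝ)}ᶜ) (nhds ((t - 1) * (p⁻¹ * L⁻¹))) := by
    have hps : Filter.Tendsto (fun r : ℝ => p - r) (nhdsWithin 0 {(0:ℝ)}ᶜ) (nhds p) :=
      (((continuous_const.sub continuous_id).tendsto' 0 p (by simp)).mono_left
        nhdsWithin_le_nhds)
    exact (tendsto_const_nhds.sub hcont).mul ((hps.inv₀ hp0).mul (s1.inv₀ hL))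
  have hBlim : Filter.Tendsto B (nhdsWithin 0 {(0:ℝ)}ᶜ)
      (nhds (p * (-p⁻¹ - -(L / (t - 1))))) :=
    (tendsto_const_nhds.mul (s2.sub s3))
  -- combined limit
  have hkey : Filter.Tendsto (fun r => A r * Real.exp (B r)) (nhdsWithin 0 {(0:ℝ)}ᶜ)
      (nhds (Specht t)) := by
    have := hAlim.mul ((Real.continuous_exp.tendsto _).comp hBlim)
    convert this using 2
    · rfl
    rw [Specht, if_neg ht1, Real.rpow_def_of_pos ht0, hlogt]
    rw [Real.exp_eq_exp.mpr (show p * (-p⁻¹ - -(L / (t - 1))) = -1 + p * L * (1/(t-1)) by field_simp; ring)]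
    rw [Real.exp_add, Real.exp_neg]
    field_simp
  -- eventual equality
  have hev : (fun r : ℝ => Kconst (h ^ r) (p / r)) =ᶠ[nhdsWithin 0 {(0:ℝ)}ᶜ]
      fun r => A r * Real.exp (B r) := by
    have ev1 : ∀ᶠ r in nhdsWithin (0:ℝ) {(0:ℝ)}ᶜ, r ≠ 0 := by
      filter_upwards [self_mem_nhdsWithin] with r hr using hr
    have ev2 : ∀ᶠ r in nhdsWithin (0:ℝ) {(0:ℝ)}ᶜ, 0 < (t - h ^ r) / (t - 1) := by
      have hu : Filter.Tendsto (fun r : ℝ => (t - h ^ r) / (t - 1)) (nhdsWithin 0 {(0:ℝ)}ᶜ)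
          (nhds 1) := by
        have h1 : Filter.Tendsto (fun r : ℝ => t - h ^ r) (nhdsWithin 0 {(0:ℝ)}ᶜ)
            (nhds (t - 1)) := tendsto_const_nhds.sub hcont
        have := h1.div_const (t - 1)
        simpa [div_self ht1'] using this
      exact hu.eventually (eventually_gt_nhds one_pos)
    have ev3 : ∀ᶠ r in nhdsWithin (0:ℝ) {(0:ℝ)}ᶜ, |r| < |p| := by
      apply eventually_nhdsWithin_of_eventually_nhds
      have : Filter.Tendsto (fun r : ℝ => |r|) (nhds 0) (nhds 0) := by
        simpa using continuous_abs.tendsto (0:ℝ)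
      exact this.eventually (eventually_lt_nhds (abs_pos.mpr hp0))
    filter_upwards [ev1, ev2, ev3] with r hr0 hpos hrp
    have hpr : p - r ≠ 0 := by
      intro H
      rw [sub_eq_zero] at H
      rw [H] at hrp
      exact lt_irrefl _ hrp
    have hhr1 : h ^ r - 1 ≠ 0 := by
      rw [sub_ne_zero, Real.rpow_def_of_pos hh, Ne, Real.exp_eq_one_iff]
      exact mul_ne_zero hL hr0
    have hbase1 : 0 < 1 - r / p := by
      have : |r / p| < 1 := by
        rw [abs_div]
        exact (div_lt_one (abs_pos.mpr hp0)).mpr hrp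
      linarith [abs_lt.mp this |>.2]
    have htmhr : t - h ^ r ≠ 0 := by
      intro H
      rw [H, zero_div] at hpos
      exact lt_irrefl _ hpos
    have hpow : (h ^ r) ^ (p / r) = t := by
      rw [htdef, ← Real.rpow_mul hh.le]
      congr 1
      field_simp
    have hratio : 0 < (t - 1) / (t - h ^ r) := by
      have := inv_pos.mpr hpos
      rwa [inv_div] at this
    rw [Kconst, hpow]
    congr 1
    · -- first factor
      rw [hA]
      field_simp
    · -- second factor
      have hbeq : ((p / r - 1) / (p / r)) * ((t - 1) / (t - h ^ r))
          = (1 - r / p) * ((t - 1) / (t - h ^ r)) := by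
        congr 1
        field_simp
      have hbpos : 0 < ((p / r - 1) / (p / r)) * ((t - 1) / (t - h ^ r)) := by
        rw [hbeq]; exact mul_pos hbase1 hratio
      rw [Real.rpow_def_of_pos hbpos, hbeq, Real.log_mul (ne_of_gt hbase1) (ne_of_gt hratio)]
      congr 1
      have : Real.log ((t - 1) / (t - h ^ r)) = - Real.log ((t - h ^ r) / (t - 1)) := by
        rw [← Real.log_inv, inv_div]
      rw [this, hB]
      field_simp
      ring
  exact hkey.congr' hev.symm
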